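/- Let d > k ≥ 1 be integers. There exists a constant C ≥ 1, depending only on d and k, with the following property: for every ξ ∈ ℝ^d∖{0}, every η > 0, and every k-dimensional linear subspace s of ℝ^d admitting an orthonormal basis x_1,…,x_k with |⟨ξ, x_i⟩| < η‖ξ‖ for all i = 1,…,k, there exists a k-dimensional linear subspace t of ℝ^d with t ⊆ ξ^⊥ and d_{(d,k)}(s,t) < Cη. -/

import Mathlib

open MeasureTheory Metric Module
open scoped RealInnerProductSpace ENNReal

noncomputable section

/-- `ℝ^d`. -/
abbrev Ed (d : ℕ) : Type := EuclideanSpace ℝ (Fin d)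

/-- The Grassmannian `G(d,k)` of `k`-dimensional linear subspaces of `ℝ^d`. -/
def Gr (d k : ℕ) : Type := {s : Submodule ℝ (Ed d) // finrank ℝ s = k}

/-- The intersection of a subspace with the unit sphere. -/
def grSphere {d k : ℕ} (s : Gr d k) : Set (Ed d) :=
  (s.1 : Set (Ed d)) ∩ sphere (0 : Ed d) 1

lemma grSphere_isClosed {d k : ℕ} (s : Gr d k) : IsClosed (grSphere s) :=
  (Submodule.closed_of_finiteDimensional s.1).inter isClosed_sphere

lemma submodule_eq_of_sphere_eq {d : ℕ} {s t : Submodule ℝ (Ed d)}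
    (h : (s : Set (Ed d)) ∩ sphere (0 : Ed d) 1 = (t : Set (Ed d)) ∩ sphere (0 : Ed d) 1) :
    s = t := by
  have key : ∀ {s t : Submodule ℝ (Ed d)},
      (s : Set (Ed d)) ∩ sphere (0 : Ed d) 1 = (t : Set (Ed d)) ∩ sphere (0 : Ed d) 1 →
      s ≤ t := by
    intro s t h x hx
    rcases eq_or_ne x 0 with rfl | hx0
    · exact t.zero_mem
    · have hu : ‖x‖⁻¹ • x ∈ (s : Set (Ed d)) ∩ sphere (0 : Ed d) 1 := by
        refine ⟨s.smul_mem _ hx, ?_⟩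
        rw [mem_sphere_iff_norm, sub_zero, norm_smul, norm_inv, norm_norm,
          inv_mul_cancel₀ (norm_ne_zero_iff.2 hx0)]
      rw [h] at hu
      have := t.smul_mem ‖x‖ hu.1
      rwa [smul_smul, mul_inv_cancel₀ (norm_ne_zero_iff.2 hx0), one_smul] at this
  exact le_antisymm (key h) (key h.symm)

/-- The metric `d_{(d,k)}` on the Grassmannian: Hausdorff distance between the
intersections with the unit sphere. -/
instance GrEMetric (d k : ℕ) : EMetricSpace (Gr d k) where
  edist s t := EMetric.hausdorffEdist (grSphere s) (grSphere t)
  edist_self s := EMetric.hausdorffEdist_self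
  edist_comm s t := EMetric.hausdorffEdist_comm
  edist_triangle s t u := EMetric.hausdorffEdist_triangle
  eq_of_edist_eq_zero := by
    intro s t h
    have heq := (EMetric.hausdorffEdist_zero_iff_eq_of_closed (grSphere_isClosed s)
      (grSphere_isClosed t)).1 h
    exact Subtype.ext (submodule_eq_of_sphere_eq heq)

lemma grSphere_nonempty {d k : ℕ} (hk : 1 ≤ k) (s : Gr d k) : (grSphere s).Nonempty := by
  have hbot : s.1 ≠ ⊥ := by
    intro hb
    have h2 := s.2
    rw [hb, finrank_bot] at h2
    omega
  obtain ⟨x, hxs, hx0⟩ := Submodule.ne_bot_iff _ |>.1 hbot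
  refine ⟨‖x‖⁻¹ • x, s.1.smul_mem _ hxs, ?_⟩
  rw [mem_sphere_iff_norm, sub_zero, norm_smul, norm_inv, norm_norm,
    inv_mul_cancel₀ (norm_ne_zero_iff.2 hx0)]

lemma grSphere_empty {d : ℕ} (s : Gr d 0) : grSphere s = ∅ := by
  have hb : s.1 = ⊥ := Submodule.finrank_eq_zero.1 s.2
  ext x
  simp [grSphere, hb, mem_sphere_iff_norm]

lemma gr_edist_ne_top {d k : ℕ} (s t : Gr d k) : edist s t ≠ ⊤ := by
  rcases Nat.eq_zero_or_pos k with rfl | hk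
  · show EMetric.hausdorffEdist (grSphere s) (grSphere t) ≠ ⊤
    rw [grSphere_empty s, grSphere_empty t, EMetric.hausdorffEdist]
    rw [Metric.hausdorffEDist_self]
    exact ENNReal.zero_ne_top
  · exact Metric.hausdorffEdist_ne_top_of_nonempty_of_bounded
      (grSphere_nonempty hk s) (grSphere_nonempty hk t)
      ((isBounded_sphere (x := (0 : Ed d)) (r := 1)).subset Set.inter_subset_right)
      ((isBounded_sphere (x := (0 : Ed d)) (r := 1)).subset Set.inter_subset_right)

instance GrMetric (d k : ℕ) : MetricSpace (Gr d k) :=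
  EMetricSpace.toMetricSpace gr_edist_ne_top

instance (d k : ℕ) : MeasurableSpace (Gr d k) := borel _
instance (d k : ℕ) : BorelSpace (Gr d k) := ⟨rfl⟩

/-- The set `S_{ξ,η}` of subspaces nearly orthogonal to `ξ`. -/
def Sslab {d k : ℕ} (ξ : Ed d) (η : ℝ) : Set (Gr d k) :=
  {s | ‖(s.1.orthogonalProjection ξ : Ed d)‖ < η * ‖ξ‖}

/-- `Γ ⊆ G(d,k)` is `β`-scaling. -/
def BetaScaling {d k : ℕ} (Γ : Set (Gr d k)) (β : ℝ) : Prop :=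
  ∃ γ : Measure (Gr d k), IsProbabilityMeasure γ ∧ γ Γᶜ = 0 ∧
    ∃ C : ℝ, 0 < C ∧ ∀ ξ : Ed d, ξ ≠ 0 → ∀ η : ℝ, 0 < η →
      γ (Sslab ξ η) ≤ ENNReal.ofReal (C * η ^ β)

/-- `E` is a `(d,k,Γ)`-set. -/
def IsDKSet {d k : ℕ} (Γ : Set (Gr d k)) (E : Set (Ed d)) : Prop :=
  ∀ s ∈ Γ, ∃ (t : Ed d) (x : Fin k → Ed d), Orthonormal ℝ x ∧ (∀ i, x i ∈ s.1) ∧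
    ∀ r : Fin k → ℝ, (∀ i, r i ∈ Set.Icc (0 : ℝ) 1) → t + ∑ i, r i • x i ∈ E

/-- Fourier transform of a measure on `ℝ^d`. -/
def FT {d : ℕ} (μ : Measure (Ed d)) (ξ : Ed d) : ℂ :=
  ∫ x, Complex.exp (-2 * Real.pi * Complex.I * (⟪ξ, x⟫ : ℝ)) ∂μ

end

section GrAux

lemma gr_dist_eq {d k : ℕ} (s t : Gr d k) :
    dist s t = Metric.hausdorffDist (grSphere s) (grSphere t) := rfl

lemma dist_le_two_of_mem_sphere {d : ℕ} {a b : Ed d}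
    (ha : a ∈ sphere (0 : Ed d) 1) (hb : b ∈ sphere (0 : Ed d) 1) : dist a b ≤ 2 := by
  have h1 : dist a 0 = 1 := mem_sphere.1 ha
  have h2 : dist b 0 = 1 := mem_sphere.1 hb
  calc dist a b ≤ dist a 0 + dist 0 b := dist_triangle _ _ _
    _ = 2 := by rw [dist_comm (0 : Ed d) b]; rw [h1, h2]; norm_num

lemma exists_gr_le_orthogonal (d k : ℕ) (hk : 1 ≤ k) (hkd : k < d) (ξ : Ed d) (hξ : ξ ≠ 0) :
    ∃ t : Gr d k, t.1 ≤ (Submodule.span ℝ {ξ})ᗮ := by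
  have hV : finrank ℝ ((Submodule.span ℝ {ξ})ᗮ : Submodule ℝ (Ed d)) = d - 1 := by
    have h1 : finrank ℝ (Submodule.span ℝ {ξ}) = 1 := finrank_span_singleton hξ
    have h2 := (Submodule.span ℝ {ξ}).finrank_add_finrank_orthogonal
    rw [h1, finrank_euclideanSpace_fin] at h2
    omega
  have hkV : k ≤ finrank ℝ ((Submodule.span ℝ {ξ})ᗮ : Submodule ℝ (Ed d)) := by rw [hV]; omega
  let b := stdOrthonormalBasis ℝ ((Submodule.span ℝ {ξ})ᗮ : Submodule ℝ (Ed d))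
  let w : Fin k → Ed d := fun i => (b (Fin.castLE hkV i) : Ed d)
  have hw : Orthonormal ℝ w := by
    have h1 : Orthonormal ℝ (fun j => (b j : Ed d)) :=
      b.orthonormal.comp_linearIsometry (Submodule.span ℝ {ξ})ᗮ.subtypeₗᵢ
    exact h1.comp _ (Fin.castLE_injective hkV)
  refine ⟨⟨Submodule.span ℝ (Set.range w), ?_⟩, ?_⟩
  · rw [finrank_span_eq_card hw.linearIndependent, Fintype.card_fin]
  · rw [Submodule.span_le]
    rintro _ ⟨i, rfl⟩
    exact (b (Fin.castLE hkV i)).2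

set_option maxHeartbeats 1000000 in
lemma gr_key_dist {d k : ℕ} (hk : 1 ≤ k) (ξ : Ed d) (hξ : ξ ≠ 0) (η : ℝ) (hη : 0 < η)
    (hδ : (k : ℝ) * η < 1 / 2)
    (s : Gr d k) (x : Fin k → Ed d) (hON : Orthonormal ℝ x) (hmem : ∀ i, x i ∈ s.1)
    (hsm : ∀ i, |⟪ξ, x i⟫| < η * ‖ξ‖) :
    ∃ t : Gr d k, t.1 ≤ (Submodule.span ℝ {ξ})ᗮ ∧ dist s t ≤ 2 * ((k : ℝ) * η) := by
  set δ : ℝ := (k : ℝ) * η with hδdef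
  have hk' : (1 : ℝ) ≤ (k : ℝ) := by exact_mod_cast hk
  have hδ0 : 0 ≤ δ := by positivity
  have hδ2 : δ < 1 / 2 := hδ
  have hξn : (0 : ℝ) < ‖ξ‖ := norm_pos_iff.2 hξ
  -- the orthonormal family spans s
  have hspan : Submodule.span ℝ (Set.range x) = s.1 := by
    apply Submodule.eq_of_le_of_finrank_le
    · rw [Submodule.span_le]; rintro _ ⟨i, rfl⟩; exact hmem i
    · rw [s.2, finrank_span_eq_card hON.linearIndependent, Fintype.card_fin]
  -- the key inner product estimate on s
  have hkey : ∀ y ∈ s.1, |⟪ξ, y⟫| ≤ δ * ‖ξ‖ * ‖y‖ := by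
    intro y hy
    rw [← hspan] at hy
    obtain ⟨c, rfl⟩ := (Submodule.mem_span_range_iff_exists_fun ℝ).1 hy
    set y : Ed d := ∑ j, c j • x j with hydef
    have hci : ∀ i, |c i| ≤ ‖y‖ := by
      intro i
      calc |c i| = |⟪x i, y⟫| := by rw [hON.inner_right_fintype c i]
        _ ≤ ‖x i‖ * ‖y‖ := abs_real_inner_le_norm _ _
        _ = ‖y‖ := by rw [hON.1 i, one_mul]
    calc |⟪ξ, y⟫| = |∑ j, c j * ⟪ξ, x j⟫| := by
          rw [hydef, inner_sum]
          congr 1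
          exact Finset.sum_congr rfl fun j _ => real_inner_smul_right _ _ _
      _ ≤ ∑ j, |c j * ⟪ξ, x j⟫| := Finset.abs_sum_le_sum_abs _ _
      _ = ∑ j, |c j| * |⟪ξ, x j⟫| := Finset.sum_congr rfl fun j _ => abs_mul _ _
      _ ≤ ∑ _j : Fin k, ‖y‖ * (η * ‖ξ‖) := Finset.sum_le_sum fun j _ =>
          mul_le_mul (hci j) (le_of_lt (hsm j)) (abs_nonneg _) (norm_nonneg _)
      _ = (k : ℝ) * (‖y‖ * (η * ‖ξ‖)) := by
          rw [Finset.sum_const, Finset.card_univ, Fintype.card_fin, nsmul_eq_mul]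
      _ = δ * ‖ξ‖ * ‖y‖ := by rw [hδdef]; ring
  -- the projection onto ξ-perp
  set P : Ed d →ₗ[ℝ] Ed d :=
    LinearMap.id - ((innerSL ℝ ξ).toLinearMap.smulRight ((‖ξ‖ ^ 2)⁻¹ • ξ)) with hPdef
  have hPapply : ∀ y, P y = y - ⟪ξ, y⟫ • (‖ξ‖ ^ 2)⁻¹ • ξ := fun y => rfl
  have hPsub : ∀ y, y - P y = (⟪ξ, y⟫ * (‖ξ‖ ^ 2)⁻¹) • ξ := by
    intro y
    rw [hPapply, sub_sub_cancel, smul_smul]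
  have hPorth : ∀ y, ⟪ξ, P y⟫ = 0 := by
    intro y
    rw [hPapply, inner_sub_right, real_inner_smul_right, real_inner_smul_right,
      real_inner_self_eq_norm_sq]
    field_simp
    ring
  have hPmemV : ∀ y, P y ∈ (Submodule.span ℝ {ξ})ᗮ := fun y =>
    Submodule.mem_orthogonal_singleton_iff_inner_right.2 (hPorth y)
  have hPdiff : ∀ y ∈ s.1, ‖y - P y‖ ≤ δ * ‖y‖ := by
    intro y hy
    rw [hPsub, norm_smul]
    have h1 : ‖⟪ξ, y⟫ * (‖ξ‖ ^ 2)⁻¹‖ * ‖ξ‖ = |⟪ξ, y⟫| / ‖ξ‖ := by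
      rw [Real.norm_eq_abs, abs_mul, abs_of_nonneg (by positivity : (0:ℝ) ≤ (‖ξ‖ ^ 2)⁻¹)]
      field_simp
    rw [h1, div_le_iff₀ hξn]
    calc |⟪ξ, y⟫| ≤ δ * ‖ξ‖ * ‖y‖ := hkey y hy
      _ = δ * ‖y‖ * ‖ξ‖ := by ring
  have hPub : ∀ y ∈ s.1, ‖P y‖ ≤ (1 + δ) * ‖y‖ := by
    intro y hy
    calc ‖P y‖ = ‖y - (y - P y)‖ := by rw [sub_sub_cancel]
      _ ≤ ‖y‖ + ‖y - P y‖ := norm_sub_le _ _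
      _ ≤ ‖y‖ + δ * ‖y‖ := by linarith [hPdiff y hy]
      _ = (1 + δ) * ‖y‖ := by ring
  have hPlb : ∀ y ∈ s.1, (1 - δ) * ‖y‖ ≤ ‖P y‖ := by
    intro y hy
    have h := norm_add_le (y - P y) (P y)
    rw [sub_add_cancel] at h
    have := hPdiff y hy
    nlinarith
  -- the target subspace
  have hrank : finrank ℝ (Submodule.map P s.1) = k := by
    have hker : ∀ z : s.1, P.domRestrict s.1 z = 0 → z = 0 := by
      intro z hz
      have hz' : P (z : Ed d) = 0 := hz
      have hlb := hPlb z z.2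
      rw [hz', norm_zero] at hlb
      have hz0 : ‖(z : Ed d)‖ = 0 := by nlinarith [norm_nonneg (z : Ed d)]
      exact Subtype.ext (norm_eq_zero.1 hz0)
    have hinj : Function.Injective (P.domRestrict s.1) :=
      LinearMap.ker_eq_bot.1 (LinearMap.ker_eq_bot'.2 hker)
    rw [← LinearMap.range_domRestrict, LinearMap.finrank_range_of_inj hinj, s.2]
  refine ⟨⟨Submodule.map P s.1, hrank⟩, ?_, ?_⟩
  · exact Submodule.map_le_iff_le_comap.2 fun z _ => hPmemV z
  · refine (gr_dist_eq s ⟨Submodule.map P s.1, hrank⟩).le.trans ?_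
    apply Metric.hausdorffDist_le_of_mem_dist (by positivity)
    · rintro a ⟨has, hasph⟩
      have has : a ∈ s.1 := has
      have ha1 : ‖a‖ = 1 := by rwa [mem_sphere_zero_iff_norm] at hasph
      have hPalb : 1 - δ ≤ ‖P a‖ := by
        have := hPlb a has; rwa [ha1, mul_one] at this
      have hPaub : ‖P a‖ ≤ 1 + δ := by
        have := hPub a has; rwa [ha1, mul_one] at this
      have hPan : (0 : ℝ) < ‖P a‖ := by linarith
      refine ⟨‖P a‖⁻¹ • P a, ⟨?_, ?_⟩, ?_⟩
      · exact Submodule.smul_mem _ _ (Submodule.mem_map_of_mem has)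
      · rw [mem_sphere_zero_iff_norm, norm_smul, norm_inv, norm_norm,
          inv_mul_cancel₀ (ne_of_gt hPan)]
      · have hstep1 : dist a (P a) ≤ δ := by
          rw [dist_eq_norm]
          have := hPdiff a has; rwa [ha1, mul_one] at this
        have hstep2 : dist (P a) (‖P a‖⁻¹ • P a) ≤ δ := by
          rw [dist_eq_norm]
          have heq : P a - ‖P a‖⁻¹ • P a = (1 - ‖P a‖⁻¹) • P a := by
            rw [sub_smul, one_smul]
          rw [heq, norm_smul, Real.norm_eq_abs]
          have hinv : (1 - ‖P a‖⁻¹) * ‖P a‖ = ‖P a‖ - 1 := by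
            rw [sub_mul, one_mul, inv_mul_cancel₀ (ne_of_gt hPan)]
          have habs : |1 - ‖P a‖⁻¹| * ‖P a‖ = |‖P a‖ - 1| := by
            calc |1 - ‖P a‖⁻¹| * ‖P a‖ = |(1 - ‖P a‖⁻¹) * ‖P a‖| := by
                  rw [abs_mul, abs_of_nonneg (norm_nonneg (P a))]
              _ = |‖P a‖ - 1| := by rw [hinv]
          rw [habs, abs_le]
          constructor <;> linarith
        calc dist a (‖P a‖⁻¹ • P a) ≤ dist a (P a) + dist (P a) (‖P a‖⁻¹ • P a) :=
              dist_triangle _ _ _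
          _ ≤ 2 * δ := by linarith
    · rintro b ⟨hbt, hbsph⟩
      have hbt : b ∈ Submodule.map P s.1 := hbt
      obtain ⟨z, hzs, rfl⟩ := hbt
      have hb1 : ‖P z‖ = 1 := by rwa [mem_sphere_zero_iff_norm] at hbsph
      have hlb := hPlb z hzs
      have hub := hPub z hzs
      rw [hb1] at hlb hub
      have hzpos : (0 : ℝ) < ‖z‖ := by nlinarith [norm_nonneg z]
      have hz0 : z ≠ 0 := norm_pos_iff.1 hzpos
      set u : Ed d := ‖z‖⁻¹ • z with hudef
      have hus : u ∈ s.1 := Submodule.smul_mem _ _ hzs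
      have hu1 : ‖u‖ = 1 := by
        rw [hudef, norm_smul, norm_inv, norm_norm, inv_mul_cancel₀ (ne_of_gt hzpos)]
      refine ⟨u, ⟨hus, by rwa [mem_sphere_zero_iff_norm]⟩, ?_⟩
      have hPu : P u = ‖z‖⁻¹ • P z := by rw [hudef, P.map_smul]
      have hstep1 : dist u (P u) ≤ δ := by
        rw [dist_eq_norm]
        have := hPdiff u hus; rwa [hu1, mul_one] at this
      have hstep2 : dist (P u) (P z) ≤ δ := by
        rw [dist_eq_norm, hPu]
        have heq : ‖z‖⁻¹ • P z - P z = (‖z‖⁻¹ - 1) • P z := by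
          rw [sub_smul, one_smul]
        rw [heq, norm_smul, Real.norm_eq_abs, hb1, mul_one]
        have hinv : (‖z‖⁻¹ - 1) * ‖z‖ = 1 - ‖z‖ := by
          rw [sub_mul, one_mul, inv_mul_cancel₀ (ne_of_gt hzpos)]
        have h1 : |‖z‖⁻¹ - 1| * ‖z‖ = |1 - ‖z‖| := by
          calc |‖z‖⁻¹ - 1| * ‖z‖ = |(‖z‖⁻¹ - 1) * ‖z‖| := by
                rw [abs_mul, abs_of_nonneg (norm_nonneg z)]
            _ = |1 - ‖z‖| := by rw [hinv]
        have h2 : |1 - ‖z‖| ≤ δ * ‖z‖ := by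
          rw [abs_le]
          constructor <;> nlinarith
        have h3 : |‖z‖⁻¹ - 1| * ‖z‖ ≤ δ * ‖z‖ := by rw [h1]; exact h2
        exact le_of_mul_le_mul_right h3 hzpos
      calc dist (P z) u = dist u (P z) := dist_comm _ _
        _ ≤ dist u (P u) + dist (P u) (P z) := dist_triangle _ _ _
        _ ≤ 2 * δ := by linarith

end GrAux

/-- a subspace with an orthonormal basis nearly orthogonal to `ξ` is close, in the
metric `d_{(d,k)}`, to a `k`-dimensional subspace of `ξ^⊥`. -/
theorem stmt13 (d k : ℕ) (hk : 1 ≤ k) (hkd : k < d) :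
    ∃ C : ℝ, 1 ≤ C ∧ ∀ ξ : Ed d, ξ ≠ 0 → ∀ η : ℝ, 0 < η → ∀ s : Gr d k,
      (∃ x : Fin k → Ed d, Orthonormal ℝ x ∧ (∀ i, x i ∈ s.1) ∧
        ∀ i, |⟪ξ, x i⟫| < η * ‖ξ‖) →
      ∃ t : Gr d k, t.1 ≤ (Submodule.span ℝ {ξ})ᗮ ∧ dist s t < C * η := by
  have hC1 : (1 : ℝ) ≤ 5 * k + 5 := by
    have : (0 : ℝ) ≤ (k : ℝ) := Nat.cast_nonneg k
    linarith
  refine ⟨5 * k + 5, hC1, ?_⟩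
  rintro ξ hξ η hη s ⟨x, hON, hmem, hsm⟩
  have hk' : (1 : ℝ) ≤ (k : ℝ) := by exact_mod_cast hk
  by_cases hcase : (k : ℝ) * η < 1 / 2
  · obtain ⟨t, ht1, ht2⟩ := gr_key_dist hk ξ hξ η hη hcase s x hON hmem hsm
    refine ⟨t, ht1, lt_of_le_of_lt ht2 ?_⟩
    nlinarith
  · obtain ⟨t, ht⟩ := exists_gr_le_orthogonal d k hk hkd ξ hξ
    refine ⟨t, ht, ?_⟩
    have hdist2 : dist s t ≤ 2 := by
      rw [gr_dist_eq]
      apply Metric.hausdorffDist_le_of_mem_dist (by norm_num)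
      · intro a ha
        obtain ⟨b, hb⟩ := grSphere_nonempty hk t
        exact ⟨b, hb, dist_le_two_of_mem_sphere ha.2 hb.2⟩
      · intro b hb
        obtain ⟨a, ha⟩ := grSphere_nonempty hk s
        exact ⟨a, ha, dist_le_two_of_mem_sphere hb.2 ha.2⟩
    have h2 : (2 : ℝ) < (5 * k + 5) * η := by
      push_neg at hcase
      nlinarith
    linarith
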